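/- Let K > 0, ε* > 0, α, β be real constants. Then there exists a twice continuously differentiable function Φ : ℝ → ℝ defined on all of (-∞, +∞) satisfying Φ''(s) = ε* e^{-Φ(s)/K} for all s ∈ ℝ with Φ(0) = α and Φ'(0) = β. -/

import Mathlib

/-- Global existence for the ODE `Φ'' = ε* e^{-Φ/K}` with initial
data `Φ(0) = α`, `Φ'(0) = β`: there is a twice continuously differentiable
solution defined on all of `(-∞, +∞)`. -/
theorem ode_global_existence
    (K ε α β : ℝ) (hK : 0 < K) (hε : 0 < ε) :
    ∃ Φ : ℝ → ℝ, ContDiff ℝ 2 Φ ∧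
      (∀ s : ℝ, deriv (deriv Φ) s = ε * Real.exp (-Φ s / K)) ∧
      Φ 0 = α ∧ deriv Φ 0 = β := by
  set D : ℝ := Real.exp (α / (2*K)) * Real.sqrt (2*K/ε) with hD
  have hDpos : 0 < D := by
    apply mul_pos (Real.exp_pos _)
    exact Real.sqrt_pos.mpr (by positivity)
  set E : ℝ := -β * D / (2*K) with hE
  set c : ℝ := Real.arsinh E with hc
  set l : ℝ := Real.sqrt (1 + E^2) / D with hl
  have hlpos : 0 < l := by
    apply div_pos _ hDpos
    exact Real.sqrt_pos.mpr (by positivity)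
  have hcoshc : Real.cosh c = l * D := by
    rw [hc, Real.cosh_arsinh, hl]
    field_simp
  have hsinhc : Real.sinh c = E := Real.sinh_arsinh E
  have hD2 : D^2 = Real.exp (α/K) * (2*K/ε) := by
    rw [hD, mul_pow, Real.sq_sqrt (by positivity : (0:ℝ) ≤ 2*K/ε), sq, ← Real.exp_add]
    congr 2
    field_simp
    ring
  set Φ : ℝ → ℝ := fun s => α + 2*K*(Real.log (Real.cosh (l*s - c)) - Real.log (Real.cosh c))
    with hΦdef
  -- first derivative
  have hlin : ∀ s : ℝ, HasDerivAt (fun t : ℝ => l*t - c) l s := by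
    intro s
    simpa using ((hasDerivAt_id s).const_mul l).sub_const c
  have hΦ' : ∀ s : ℝ, HasDerivAt Φ
      (2*K*l*(Real.sinh (l*s - c) / Real.cosh (l*s - c))) s := by
    intro s
    have h1 : HasDerivAt (fun t : ℝ => Real.cosh (l*t - c))
        (Real.sinh (l*s - c) * l) s :=
      (hlin s).cosh
    have h2 := h1.log (Real.cosh_pos (l*s - c)).ne'
    have h3 := ((h2.sub_const (Real.log (Real.cosh c))).const_mul (2*K)).const_add α
    exact h3.congr_deriv (by ring)
  have hderiv : deriv Φ = fun s => 2*K*l*(Real.sinh (l*s - c) / Real.cosh (l*s - c)) :=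
    funext fun s => (hΦ' s).deriv
  -- second derivative
  have hΦ'' : ∀ s : ℝ, deriv (deriv Φ) s = 2*K*l^2 / (Real.cosh (l*s - c))^2 := by
    intro s
    rw [hderiv]
    have hU := Real.cosh_pos (l*s - c)
    have hs1 : HasDerivAt (fun t : ℝ => Real.sinh (l*t - c))
        (Real.cosh (l*s - c) * l) s :=
      (hlin s).sinh
    have hs2 : HasDerivAt (fun t : ℝ => Real.cosh (l*t - c))
        (Real.sinh (l*s - c) * l) s :=
      (hlin s).cosh
    have hq := (hs1.div hs2 hU.ne').const_mul (2*K*l)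
    rw [show deriv (fun s => 2*K*l*(Real.sinh (l*s - c) / Real.cosh (l*s - c))) s = _ from hq.deriv]
    have key : Real.cosh (l*s - c) * l * Real.cosh (l*s - c) -
        Real.sinh (l*s - c) * (Real.sinh (l*s - c) * l) = l := by
      have := Real.cosh_sq_sub_sinh_sq (l*s - c)
      nlinarith [this]
    rw [key]
    field_simp
  refine ⟨Φ, ?_, ?_, ?_, ?_⟩
  · -- smoothness
    have hc1 : ContDiff ℝ 2 (fun s : ℝ => l*s - c) :=
      (contDiff_const.mul contDiff_id).sub contDiff_const
    have hc2 : ContDiff ℝ 2 (fun s : ℝ => Real.cosh (l*s - c)) :=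
      Real.contDiff_cosh.comp hc1
    have hc3 := hc2.log (fun s => (Real.cosh_pos _).ne')
    exact contDiff_const.add (contDiff_const.mul (hc3.sub contDiff_const))
  · -- the ODE
    intro s
    rw [hΦ'' s]
    have hU := Real.cosh_pos (l*s - c)
    have hC := Real.cosh_pos c
    have h1 : -Φ s / K = -α/K + (2*Real.log (Real.cosh c)
        - 2*Real.log (Real.cosh (l*s - c))) := by
      rw [hΦdef]
      field_simp
      ring
    have h2 : (2:ℝ)*Real.log (Real.cosh c) - 2*Real.log (Real.cosh (l*s - c))
        = Real.log ((Real.cosh c)^2 / (Real.cosh (l*s - c))^2) := by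
      rw [Real.log_div (pow_ne_zero 2 hC.ne') (pow_ne_zero 2 hU.ne'),
        Real.log_pow, Real.log_pow]
      push_cast; ring
    rw [h1, h2, Real.exp_add, Real.exp_log (by positivity)]
    rw [hcoshc]
    have hexp : Real.exp (-α/K) * Real.exp (α/K) = 1 := by
      rw [← Real.exp_add]
      have h0 : -α/K + α/K = 0 := by ring
      rw [h0, Real.exp_zero]
    have : (l*D)^2 = l^2 * (Real.exp (α/K) * (2*K/ε)) := by
      rw [mul_pow, hD2]
    rw [this]
    have hfin : ε * (Real.exp (-α/K) * (l^2 * (Real.exp (α/K) * (2*K/ε))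
        / Real.cosh (l*s - c)^2))
        = (Real.exp (-α/K) * Real.exp (α/K)) * (2*K*l^2 / Real.cosh (l*s - c)^2) := by
      field_simp
    rw [hfin, hexp, one_mul]
  · -- Φ 0 = α
    rw [hΦdef]
    simp [Real.cosh_neg]
  · -- Φ' 0 = β
    rw [hderiv]
    simp only [mul_zero, zero_sub, Real.sinh_neg, Real.cosh_neg, hsinhc, hcoshc]
    rw [hE]
    field_simp
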